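/- The maximum-column-sum norm of Ā is strictly less than one: |||Ā|||₁ < 1. -/

import Mathlib

open Matrix Finset

/-- Let `A` be an `n × n` real matrix (`n ≥ 1`) with nonpositive off-diagonal entries
whose diagonal entries satisfy `A i i = 1 - ∑_{j ≠ i} A j i`.  With
`D = diag(A 1 1, …, A n n)` and `Ā = (D - A) * D⁻¹`, the maximum-column-sum norm of `Ā`
is strictly less than one: `|||Ā|||₁ = max_j ∑_i |Ā i j| < 1`. -/
theorem matrix_column_stochastic_M_matrix_Abar_one_norm_lt_one
    (n : ℕ) (hn : 1 ≤ n) (A : Matrix (Fin n) (Fin n) ℝ)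
    (hoff : ∀ i j, i ≠ j → A i j ≤ 0)
    (hdiag : ∀ i, A i i = 1 - ∑ j ∈ Finset.univ.erase i, A j i)
    (D : Matrix (Fin n) (Fin n) ℝ) (hD : D = Matrix.diagonal fun i => A i i)
    (Abar : Matrix (Fin n) (Fin n) ℝ) (hAbar : Abar = (D - A) * D⁻¹) :
    Finset.univ.sup' (Finset.univ_nonempty_iff.mpr (Fin.pos_iff_nonempty.mp hn))
      (fun j => ∑ i, |Abar i j|) < 1 := by
  have hpos : ∀ i, (1:ℝ) ≤ A i i := by
    intro i
    have hs : ∑ j ∈ Finset.univ.erase i, A j i ≤ 0 :=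
      Finset.sum_nonpos fun j hj => hoff j i (Finset.ne_of_mem_erase hj)
    rw [hdiag i]; linarith
  have hne : ∀ i, A i i ≠ 0 := fun i => by have := hpos i; linarith
  have hinv : D⁻¹ = Matrix.diagonal fun i => (A i i)⁻¹ := by
    rw [hD]
    apply Matrix.inv_eq_right_inv
    rw [Matrix.diagonal_mul_diagonal, ← Matrix.diagonal_one]
    have : (fun i => A i i * (A i i)⁻¹) = fun _ => (1:ℝ) :=
      funext fun i => mul_inv_cancel₀ (hne i)
    rw [this]
  have hentry : ∀ i j, Abar i j = (if i = j then 0 else -A i j) * (A j j)⁻¹ := by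
    intro i j
    rw [hAbar, hinv, Matrix.mul_diagonal, Matrix.sub_apply, hD, Matrix.diagonal_apply]
    by_cases h : i = j
    · subst h; simp
    · simp [h]
  rw [Finset.sup'_lt_iff]
  intro j _
  have hinvpos : 0 < (A j j)⁻¹ := inv_pos.mpr (lt_of_lt_of_le one_pos (hpos j))
  have habs : ∀ i, |Abar i j| = (if i = j then 0 else -A i j) * (A j j)⁻¹ := by
    intro i
    rw [hentry i j, abs_mul, abs_of_pos hinvpos]
    congr 1
    by_cases h : i = j
    · simp [h]
    · rw [if_neg h]
      exact abs_of_nonneg (by linarith [hoff i j h])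
  calc ∑ i, |Abar i j|
      = (∑ i ∈ Finset.univ.erase j, -A i j) * (A j j)⁻¹ := by
        simp only [habs]
        rw [← Finset.sum_mul]
        congr 1
        rw [← Finset.sum_erase (s := Finset.univ) (a := j)
          (f := fun i => if i = j then 0 else -A i j) (by simp)]
        exact Finset.sum_congr rfl fun i hi => if_neg (Finset.ne_of_mem_erase hi)
    _ = (A j j - 1) * (A j j)⁻¹ := by
        have hs : ∑ i ∈ Finset.univ.erase j, -A i j
            = -∑ i ∈ Finset.univ.erase j, A i j := by simp
        have := hdiag j
        congr 1
        rw [hs]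
        linarith
    _ < 1 := by
        rw [← div_eq_mul_inv, div_lt_one (by linarith [hpos j])]
        linarith
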